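/- The convex hull of any finite set of points in ℝⁿ is an H-polytope: it is bounded and can be written as a finite intersection of closed half-spaces. In particular, every V-polytope is an H-polytope. -/

import Mathlib

open RealInnerProductSpace

/-- An `H`-polyhedron: a finite intersection of closed half-spaces
`{x | ⟪aᵢ, x⟫ ≤ bᵢ}`. -/
def IsHPolyhedron {n : ℕ} (A : Set (EuclideanSpace ℝ (Fin n))) : Prop :=
  ∃ (p : ℕ) (a : Fin p → EuclideanSpace ℝ (Fin n)) (b : Fin p → ℝ),
    A = ⋂ i, {x : EuclideanSpace ℝ (Fin n) | ⟪a i, x⟫ ≤ b i}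

open Finset

namespace VHAux

/-- dot product on `Fin k → ℝ`. -/
def dot {k : ℕ} (a x : Fin k → ℝ) : ℝ := ∑ j, a j * x j

/-- H-representability with an arbitrary finite index type. -/
def HRep {k : ℕ} (A : Set (Fin k → ℝ)) : Prop :=
  ∃ (ι : Type) (_ : Fintype ι) (a : ι → Fin k → ℝ) (b : ι → ℝ),
    A = ⋂ i, {x | dot (a i) x ≤ b i}

lemma dot_snoc {k : ℕ} (a : Fin (k + 1) → ℝ) (y : Fin k → ℝ) (t : ℝ) :
    dot a (Fin.snoc y t) = dot (Fin.init a) y + a (Fin.last k) * t := by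
  simp [dot, Fin.sum_univ_castSucc, Fin.init]

lemma dot_smul_sub {k : ℕ} (c d : ℝ) (u v y : Fin k → ℝ) :
    dot (c • u - d • v) y = c * dot u y - d * dot v y := by
  simp [dot, sub_mul, Finset.sum_sub_distrib, Finset.mul_sum, mul_assoc]

lemma div_aux {bi di ci bp dp cp : ℝ} (hci : ci < 0) (hcp : 0 < cp)
    (h : cp * di - ci * dp ≤ cp * bi - ci * bp) :
    (bi - di) / ci ≤ (bp - dp) / cp := by
  rw [le_div_iff₀ hcp, div_mul_eq_mul_div, div_le_iff_of_neg hci]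
  nlinarith [h]

/-- Fourier–Motzkin elimination: projecting out the last coordinate. -/
lemma HRep.proj {k : ℕ} {A : Set (Fin (k + 1) → ℝ)} (h : HRep A) :
    HRep {y : Fin k → ℝ | ∃ t, Fin.snoc y t ∈ A} := by
  classical
  obtain ⟨ι, _, a, b, rfl⟩ := h
  set c : ι → ℝ := fun i => a i (Fin.last k) with hcdef
  set a' : ι → Fin k → ℝ := fun i => Fin.init (a i) with hadef
  refine ⟨{i // c i = 0} ⊕ ({i // 0 < c i} × {i // c i < 0}), inferInstance,
    Sum.elim (fun i => a' i.1) (fun q => c q.1.1 • a' q.2.1 - c q.2.1 • a' q.1.1),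
    Sum.elim (fun i => b i.1) (fun q => c q.1.1 * b q.2.1 - c q.2.1 * b q.1.1), ?_⟩
  ext y
  simp only [Set.mem_setOf_eq, Set.mem_iInter]
  constructor
  · rintro ⟨t, ht⟩ i
    have key : ∀ i, dot (a' i) y + c i * t ≤ b i := by
      intro i
      have := ht i; rwa [dot_snoc (a i) y t] at this
    rcases i with ⟨i, hi⟩ | ⟨⟨i, hi⟩, ⟨j, hj⟩⟩
    · have := key i
      simp only [Sum.elim_inl]
      linarith [this, hi ▸ this]
    · simp only [Sum.elim_inr, dot_smul_sub]
      nlinarith [mul_le_mul_of_nonneg_left (key j) hi.le,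
        mul_le_mul_of_nonpos_left (key i) hj.le]
  · intro hy
    set f : ι → ℝ := fun i => (b i - dot (a' i) y) / c i with hfdef
    have hZ : ∀ i, c i = 0 → dot (a' i) y ≤ b i := fun i hi => hy (Sum.inl ⟨i, hi⟩)
    have hPN : ∀ i j (hi : 0 < c i) (hj : c j < 0), f j ≤ f i := by
      intro i j hi hj
      have := hy (Sum.inr (⟨i, hi⟩, ⟨j, hj⟩))
      simp only [Sum.elim_inr, dot_smul_sub, Set.mem_setOf_eq] at this
      exact div_aux hj hi (by linarith)
    set P : Finset ι := univ.filter (fun i => 0 < c i) with hPdef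
    set N : Finset ι := univ.filter (fun i => c i < 0) with hNdef
    have goal_of : ∀ t, (∀ i, dot (a' i) y + c i * t ≤ b i) →
        ∃ t, ∀ i, dot (a i) (Fin.snoc y t) ≤ b i := by
      intro t ht
      refine ⟨t, fun i => ?_⟩
      simpa [dot_snoc] using ht i
    by_cases hP : P.Nonempty
    · have hP' : (P.image f).Nonempty := hP.image f
      set t := (P.image f).min' hP' with htdef
      refine goal_of t fun i => ?_
      rcases lt_trichotomy (c i) 0 with h0 | h0 | h0
      · have hle : f i ≤ t := by
          refine Finset.le_min' _ _ _ fun v hv => ?_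
          obtain ⟨p, hp, rfl⟩ := Finset.mem_image.1 hv
          exact hPN p i (by simpa [hPdef] using hp) h0
        have := mul_le_mul_of_nonpos_left hle h0.le
        have hfc : c i * f i = b i - dot (a' i) y := by
          have hne : c i ≠ 0 := h0.ne
          rw [hfdef]; field_simp
        linarith
      · rw [h0]; simpa using hZ i h0
      · have hle : t ≤ f i :=
          Finset.min'_le _ _ (Finset.mem_image_of_mem f (by simp [hPdef, h0]))
        have := mul_le_mul_of_nonneg_left hle h0.le
        have hfc : c i * f i = b i - dot (a' i) y := by
          have hne : c i ≠ 0 := h0.ne'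
          rw [hfdef]; field_simp
        linarith
    · by_cases hN : N.Nonempty
      · have hN' : (N.image f).Nonempty := hN.image f
        set t := (N.image f).max' hN' with htdef
        refine goal_of t fun i => ?_
        rcases lt_trichotomy (c i) 0 with h0 | h0 | h0
        · have hle : f i ≤ t :=
            Finset.le_max' _ _ (Finset.mem_image_of_mem f (by simp [hNdef, h0]))
          have := mul_le_mul_of_nonpos_left hle h0.le
          have hfc : c i * f i = b i - dot (a' i) y := by
            have hne : c i ≠ 0 := h0.ne
            rw [hfdef]; field_simp
          linarith
        · rw [h0]; simpa using hZ i h0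
        · exact absurd ⟨i, by simp [hPdef, h0]⟩ hP
      · refine goal_of 0 fun i => ?_
        have h1 : ¬ 0 < c i := fun h => hP ⟨i, by simp [hPdef, h]⟩
        have h2 : ¬ c i < 0 := fun h => hN ⟨i, by simp [hNdef, h]⟩
        have : c i = 0 := le_antisymm (not_lt.1 h1) (not_lt.1 h2)
        simpa [this] using hZ i this

/-- Projecting out the last `m` coordinates. -/
lemma HRep.projMany {n : ℕ} : ∀ {m : ℕ} {A : Set (Fin (n + m) → ℝ)}, HRep A →
    HRep {y : Fin n → ℝ | ∃ x : Fin m → ℝ, Fin.append y x ∈ A} := by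
  intro m
  induction m with
  | zero =>
    intro A h
    have : {y : Fin n → ℝ | ∃ x : Fin 0 → ℝ, Fin.append y x ∈ A} = A := by
      ext y
      have hy : ∀ x : Fin 0 → ℝ, Fin.append y x = y := by
        intro x
        rw [Subsingleton.elim x Fin.elim0, Fin.append_elim0]
        ext k; rfl
      constructor
      · rintro ⟨x, hx⟩; rwa [hy x] at hx
      · intro hx; exact ⟨Fin.elim0, by rwa [hy]⟩
    rw [this]; exact h
  | succ m ih =>
    intro A h
    have h' : HRep {w : Fin (n + m) → ℝ | ∃ t, Fin.snoc w t ∈ A} := HRep.proj h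
    have h'' := ih h'
    have : {y : Fin n → ℝ | ∃ x : Fin m → ℝ,
        Fin.append y x ∈ {w : Fin (n + m) → ℝ | ∃ t, Fin.snoc w t ∈ A}}
        = {y : Fin n → ℝ | ∃ x : Fin (m + 1) → ℝ, Fin.append y x ∈ A} := by
      ext y
      simp only [Set.mem_setOf_eq]
      constructor
      · rintro ⟨x, t, hxt⟩
        exact ⟨Fin.snoc x t, by rwa [Fin.append_snoc]⟩
      · rintro ⟨x, hx⟩
        refine ⟨Fin.init x, x (Fin.last m), ?_⟩
        rwa [← Fin.append_snoc, Fin.snoc_init_self]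
    rw [this] at h''
    exact h''

end VHAux

namespace VHAux

lemma dot_append {n m : ℕ} (u : Fin n → ℝ) (v : Fin m → ℝ) (z : Fin (n + m) → ℝ) :
    dot (Fin.append u v) z
      = ∑ j, u j * z (Fin.castAdd m j) + ∑ i, v i * z (Fin.natAdd n i) := by
  rw [dot, Fin.sum_univ_add]
  simp [Fin.append_left, Fin.append_right]

/-- The "combination" set is H-representable (via Fourier–Motzkin). -/
lemma hrep_combo {n m : ℕ} (s : Fin m → (Fin n → ℝ)) :
    HRep {y : Fin n → ℝ | ∃ w : Fin m → ℝ,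
      (∀ i, 0 ≤ w i) ∧ ∑ i, w i = 1 ∧ ∀ j, y j = ∑ i, w i * s i j} := by
  classical
  set B : Set (Fin (n + m) → ℝ) := {z | (∀ i, 0 ≤ z (Fin.natAdd n i)) ∧
      ∑ i, z (Fin.natAdd n i) = 1 ∧
      ∀ j, z (Fin.castAdd m j) = ∑ i, z (Fin.natAdd n i) * s i j} with hBdef
  have hB : HRep B := by
    refine ⟨(Fin m ⊕ Bool) ⊕ (Fin n × Bool), inferInstance,
      Sum.elim
        (Sum.elim
          (fun i => Fin.append (0 : Fin n → ℝ) (fun i' => if i' = i then (-1 : ℝ) else 0))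
          (fun bb => Fin.append (0 : Fin n → ℝ) (fun _ => if bb then (1 : ℝ) else -1)))
        (fun q => Fin.append (fun j' => if j' = q.1 then (if q.2 then (1 : ℝ) else -1) else 0)
          (fun i => if q.2 then -s i q.1 else s i q.1)),
      Sum.elim (Sum.elim (fun _ => 0) (fun bb => if bb then 1 else -1)) (fun _ => 0), ?_⟩
    ext z
    simp only [hBdef, Set.mem_iInter, Set.mem_setOf_eq]
    constructor
    · rintro ⟨h1, h2, h3⟩ i
      rcases i with (i | bb) | ⟨j, bb⟩
      · simp only [Sum.elim_inl, Sum.elim_inr]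
        rw [dot_append]
        simp only [Sum.elim_inl, ite_mul, neg_one_mul, zero_mul, Pi.zero_apply,
          Finset.sum_const_zero, Finset.sum_ite_eq', Finset.mem_univ, if_true, zero_add]
        simpa using h1 i
      · simp only [Sum.elim_inl, Sum.elim_inr]
        rw [dot_append]
        cases bb <;> simp [h2]
      · simp only [Sum.elim_inl, Sum.elim_inr]
        rw [dot_append]
        have hc : ∑ x : Fin m, s x j * z (Fin.natAdd n x)
            = ∑ i : Fin m, z (Fin.natAdd n i) * s i j :=
          Finset.sum_congr rfl (fun i _ => mul_comm _ _)
        cases bb <;> simp <;> linarith [h3 j, hc]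
    · intro h
      refine ⟨fun i => ?_, ?_, fun j => ?_⟩
      · have := h (Sum.inl (Sum.inl i))
        simp only [Sum.elim_inl, Sum.elim_inr] at this
        rw [dot_append] at this
        simp [ite_mul] at this
        linarith
      · have hh1 := h (Sum.inl (Sum.inr true))
        have hh2 := h (Sum.inl (Sum.inr false))
        simp only [Sum.elim_inl, Sum.elim_inr] at hh1 hh2
        rw [dot_append] at hh1 hh2
        simp at hh1 hh2
        linarith
      · have hh1 := h (Sum.inr (j, true))
        have hh2 := h (Sum.inr (j, false))
        simp only [Sum.elim_inl, Sum.elim_inr] at hh1 hh2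
        rw [dot_append] at hh1 hh2
        simp [ite_mul] at hh1 hh2
        have hc : ∑ x : Fin m, s x j * z (Fin.natAdd n x)
            = ∑ i : Fin m, z (Fin.natAdd n i) * s i j :=
          Finset.sum_congr rfl (fun i _ => mul_comm _ _)
        linarith [hh1, hh2, hc]
  have hproj := HRep.projMany (n := n) (m := m) hB
  have heq : {y : Fin n → ℝ | ∃ x : Fin m → ℝ, Fin.append y x ∈ B}
      = {y : Fin n → ℝ | ∃ w : Fin m → ℝ,
        (∀ i, 0 ≤ w i) ∧ ∑ i, w i = 1 ∧ ∀ j, y j = ∑ i, w i * s i j} := by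
    ext y
    simp only [hBdef, Set.mem_setOf_eq, Fin.append_left, Fin.append_right]
  rw [heq] at hproj
  exact hproj

/-- The convex hull of the range of a finite family equals the combination set. -/
lemma convexHull_range_eq {n m : ℕ} (s : Fin m → (Fin n → ℝ)) :
    convexHull ℝ (Set.range s) = {y : Fin n → ℝ | ∃ w : Fin m → ℝ,
      (∀ i, 0 ≤ w i) ∧ ∑ i, w i = 1 ∧ ∀ j, y j = ∑ i, w i * s i j} := by
  classical
  rw [convexHull_range_eq_exists_affineCombination]
  ext y
  simp only [Set.mem_setOf_eq]
  constructor
  · rintro ⟨t, w, hw0, hw1, rfl⟩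
    refine ⟨fun i => if i ∈ t then w i else 0, fun i => ?_, ?_, fun j => ?_⟩
    · dsimp only; split
      · exact hw0 _ ‹_›
      · exact le_rfl
    · rw [Finset.sum_ite_mem, Finset.univ_inter, hw1]
    · rw [Finset.affineCombination_eq_linear_combination _ _ _ hw1, Finset.sum_apply]
      simp only [ite_mul, zero_mul, Finset.sum_ite_mem, Finset.univ_inter,
        Pi.smul_apply, smul_eq_mul]
  · rintro ⟨w, hw0, hw1, hy⟩
    refine ⟨Finset.univ, w, fun i _ => hw0 i, hw1, ?_⟩
    rw [Finset.affineCombination_eq_linear_combination _ _ _ hw1]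
    funext j
    rw [Finset.sum_apply]
    simp only [Pi.smul_apply, smul_eq_mul]
    exact (hy j).symm

end VHAux

namespace VHAux

lemma hrep_convexHull {n : ℕ} (S : Set (Fin n → ℝ)) (hS : S.Finite) :
    HRep (convexHull ℝ S) := by
  classical
  obtain ⟨F, rfl⟩ := hS.exists_finset_coe
  set m := F.card with hm
  set s : Fin m → (Fin n → ℝ) := fun i => (F.equivFin.symm i : Fin n → ℝ) with hsdef
  have hr : Set.range s = ↑F := by
    ext y
    simp only [Set.mem_range]
    constructor
    · rintro ⟨i, rfl⟩; exact (F.equivFin.symm i).2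
    · intro hy; exact ⟨F.equivFin ⟨y, hy⟩, by simp [hsdef]⟩
  rw [← hr, convexHull_range_eq]
  exact hrep_combo s

lemma HRep.toFin {k : ℕ} {A : Set (Fin k → ℝ)} (h : HRep A) :
    ∃ (p : ℕ) (a : Fin p → Fin k → ℝ) (b : Fin p → ℝ),
      A = ⋂ q, {x | dot (a q) x ≤ b q} := by
  obtain ⟨ι, _, a, b, hab⟩ := h
  refine ⟨Fintype.card ι, fun q => a ((Fintype.equivFin ι).symm q),
    fun q => b ((Fintype.equivFin ι).symm q), ?_⟩
  rw [hab]
  ext x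
  simp only [Set.mem_iInter, Set.mem_setOf_eq]
  constructor
  · intro hx q; exact hx _
  · intro hx i; simpa using hx (Fintype.equivFin ι i)

end VHAux

/-- The convex hull of a finite set of points in `ℝⁿ` is a bounded finite
intersection of closed half-spaces, i.e. an `H`-polytope; every `V`-polytope
is an `H`-polytope. -/
theorem vPolytope_is_hPolytope (n : ℕ) (S : Set (EuclideanSpace ℝ (Fin n)))
    (hS : S.Finite) :
    Bornology.IsBounded (convexHull ℝ S) ∧ IsHPolyhedron (convexHull ℝ S) := by
  constructor
  · exact (hS.isCompact_convexHull ℝ).isBounded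
  · obtain ⟨p, a, b, hab⟩ := (VHAux.hrep_convexHull (WithLp.ofLp '' S) (hS.image _)).toFin
    refine ⟨p, (fun q => WithLp.toLp 2 (a q) : Fin p → EuclideanSpace ℝ (Fin n)), b, ?_⟩
    ext x
    have hx : x ∈ convexHull ℝ S ↔ WithLp.ofLp x ∈ convexHull ℝ (WithLp.ofLp '' S) := by
      have : WithLp.ofLp '' convexHull ℝ S = convexHull ℝ (WithLp.ofLp '' S) :=
        LinearMap.image_convexHull (WithLp.linearEquiv 2 ℝ (Fin n → ℝ)).toLinearMap S
      rw [← this]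
      exact (WithLp.ofLp_injective 2).mem_set_image.symm
    rw [hx, hab]
    simp only [Set.mem_iInter, Set.mem_setOf_eq, PiLp.inner_apply, RCLike.inner_apply,
      conj_trivial, VHAux.dot]
    simp [mul_comm]
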